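/- Let v, w be constants with 0 < v ≤ w and let φ : [0,1] → ℝ be continuous and strictly negative, such that v(−φ(x)) ≤ Vφ(x) ≤ w(−φ(x)) for all x ∈ [0,1]. Let f⁰ ∈ C¹([0,1]) be real-valued with (f⁰)′(x) > 0 for all x ∈ [0,1], and put α = min_{x∈[0,1]} (−φ(x)/(f⁰)′(x)) and β = max_{x∈[0,1]} (−φ(x)/(f⁰)′(x)). Then for every integer n ≥ 1 and every x ∈ [0,1], (α/β) v^n (f⁰)′(x) ≤ (−1)^n V^n((f⁰)′)(x) ≤ (β/α) w^n (f⁰)′(x). -/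

import Mathlib

open MeasureTheory Set Filter Topology

set_option maxHeartbeats 1000000

/-- The inverse branches u_{N,i}(x) = 1 - N/(x+i). -/
noncomputable def uNi (N i : ℕ) (x : ℝ) : ℝ := 1 - (N : ℝ) / (x + i)

/-- The operator V with (Uf)' = -V f':
`V g(x) = -Σ_{i ≥ N} [ (i+1-N)/(x+i)² ∫_{u_{N,i}(x)}^{u_{N,i+1}(x)} g
          + N(x+N-1)/((x+i-1)(x+i)³) g(u_{N,i}(x)) ]`, indexed by i = N + k. -/
noncomputable def V (N : ℕ) (g : ℝ → ℝ) (x : ℝ) : ℝ :=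
  -∑' k : ℕ,
    ((((N + k : ℕ) : ℝ) + 1 - N) / (x + ((N + k : ℕ) : ℝ)) ^ 2
        * (∫ u in (uNi N (N + k) x)..(uNi N (N + k + 1) x), g u)
      + ((N : ℝ) * (x + N - 1)) / ((x + ((N + k : ℕ) : ℝ) - 1) * (x + ((N + k : ℕ) : ℝ)) ^ 3)
        * g (uNi N (N + k) x))

namespace Stmt18Aux

/-- The k-th term of the series defining `V`. -/
noncomputable def trm (N : ℕ) (g : ℝ → ℝ) (x : ℝ) (k : ℕ) : ℝ :=
  (((N + k : ℕ) : ℝ) + 1 - N) / (x + ((N + k : ℕ) : ℝ)) ^ 2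
      * (∫ u in (uNi N (N + k) x)..(uNi N (N + k + 1) x), g u)
    + ((N : ℝ) * (x + N - 1)) / ((x + ((N + k : ℕ) : ℝ) - 1) * (x + ((N + k : ℕ) : ℝ)) ^ 3)
      * g (uNi N (N + k) x)

lemma V_eq (N : ℕ) (g : ℝ → ℝ) (x : ℝ) : V N g x = -∑' k, trm N g x k := rfl

lemma negV_eq (N : ℕ) (g : ℝ → ℝ) (x : ℝ) : -V N g x = ∑' k, trm N g x k := by
  rw [V_eq, neg_neg]

variable {N : ℕ} {x : ℝ}

lemma two_le_A (hN : 2 ≤ N) (k : ℕ) (hx : x ∈ Icc (0:ℝ) 1) :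
    (2:ℝ) ≤ x + ((N + k : ℕ) : ℝ) := by
  have h1 : (2:ℝ) ≤ (N:ℝ) := by exact_mod_cast hN
  have h2 : (0:ℝ) ≤ (k:ℝ) := Nat.cast_nonneg k
  have h3 := hx.1
  push_cast
  linarith

lemma A_pos (hN : 2 ≤ N) (k : ℕ) (hx : x ∈ Icc (0:ℝ) 1) :
    (0:ℝ) < x + ((N + k : ℕ) : ℝ) := lt_of_lt_of_le (by norm_num) (two_le_A hN k hx)

lemma k_lt_A (hN : 2 ≤ N) (k : ℕ) (hx : x ∈ Icc (0:ℝ) 1) :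
    (k:ℝ) + 1 ≤ x + ((N + k : ℕ) : ℝ) - 1 := by
  have h1 : (2:ℝ) ≤ (N:ℝ) := by exact_mod_cast hN
  have h3 := hx.1
  push_cast
  linarith

lemma uNi_mem (hN : 2 ≤ N) (k : ℕ) (hx : x ∈ Icc (0:ℝ) 1) :
    uNi N (N + k) x ∈ Icc (0:ℝ) 1 := by
  have hA : (0:ℝ) < x + ((N + k : ℕ) : ℝ) := A_pos hN k hx
  have hNA : (N:ℝ) ≤ x + ((N + k : ℕ) : ℝ) := by
    have := hx.1
    push_cast
    have : (0:ℝ) ≤ (k:ℝ) := Nat.cast_nonneg k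
    linarith [hx.1]
  have h1 : (N:ℝ) / (x + ((N + k : ℕ) : ℝ)) ≤ 1 := (div_le_one hA).mpr hNA
  have h2 : 0 ≤ (N:ℝ) / (x + ((N + k : ℕ) : ℝ)) :=
    div_nonneg (Nat.cast_nonneg N) hA.le
  constructor
  · simp only [uNi]; linarith
  · simp only [uNi]; linarith

lemma uNi_le (hN : 2 ≤ N) (k : ℕ) (hx : x ∈ Icc (0:ℝ) 1) :
    uNi N (N + k) x ≤ uNi N (N + k + 1) x := by
  have hA : (0:ℝ) < x + ((N + k : ℕ) : ℝ) := A_pos hN k hx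
  have hA' : (0:ℝ) < x + ((N + k + 1 : ℕ) : ℝ) := A_pos hN (k + 1) hx
  simp only [uNi]
  have hle : x + ((N + k : ℕ) : ℝ) ≤ x + ((N + k + 1 : ℕ) : ℝ) := by push_cast; linarith
  have := div_le_div_of_nonneg_left (c := x + ((N + k : ℕ) : ℝ))
    (Nat.cast_nonneg N : (0:ℝ) ≤ N) hA hle
  linarith

lemma uNi_Icc_subset (hN : 2 ≤ N) (k : ℕ) (hx : x ∈ Icc (0:ℝ) 1) :
    Icc (uNi N (N + k) x) (uNi N (N + k + 1) x) ⊆ Icc (0:ℝ) 1 := by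
  have h1 := uNi_mem hN k hx
  have h2 := uNi_mem hN (k + 1) hx
  rw [show N + (k + 1) = N + k + 1 by ring] at h2
  exact Icc_subset_Icc h1.1 h2.2

lemma c1_nonneg (hN : 2 ≤ N) (k : ℕ) (hx : x ∈ Icc (0:ℝ) 1) :
    0 ≤ (((N + k : ℕ) : ℝ) + 1 - N) / (x + ((N + k : ℕ) : ℝ)) ^ 2 := by
  apply div_nonneg
  · have hk : (0:ℝ) ≤ (k:ℝ) := Nat.cast_nonneg k
    push_cast
    linarith
  · positivity

lemma c2_nonneg (hN : 2 ≤ N) (k : ℕ) (hx : x ∈ Icc (0:ℝ) 1) :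
    0 ≤ ((N : ℝ) * (x + N - 1)) /
      ((x + ((N + k : ℕ) : ℝ) - 1) * (x + ((N + k : ℕ) : ℝ)) ^ 3) := by
  have h1 : (2:ℝ) ≤ (N:ℝ) := by exact_mod_cast hN
  have hA := A_pos hN k hx
  have hA1 : (0:ℝ) ≤ x + ((N + k : ℕ) : ℝ) - 1 := by
    have := two_le_A hN k hx; linarith
  apply div_nonneg
  · have := hx.1; nlinarith
  · positivity

/-- Monotonicity of the terms. -/
lemma trm_mono (hN : 2 ≤ N) {g h : ℝ → ℝ} (hg : Continuous g) (hh : Continuous h)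
    (hle : ∀ y ∈ Icc (0:ℝ) 1, g y ≤ h y) (hx : x ∈ Icc (0:ℝ) 1) (k : ℕ) :
    trm N g x k ≤ trm N h x k := by
  unfold trm
  have hint : (∫ u in (uNi N (N + k) x)..(uNi N (N + k + 1) x), g u)
      ≤ ∫ u in (uNi N (N + k) x)..(uNi N (N + k + 1) x), h u := by
    apply intervalIntegral.integral_mono_on (uNi_le hN k hx)
      (hg.intervalIntegrable _ _) (hh.intervalIntegrable _ _)
    intro y hy
    exact hle y (uNi_Icc_subset hN k hx hy)
  have hval : g (uNi N (N + k) x) ≤ h (uNi N (N + k) x) :=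
    hle _ (uNi_mem hN k hx)
  have := c1_nonneg hN k hx
  have := c2_nonneg hN k hx
  gcongr

/-- Uniform bound on the terms. -/
lemma trm_bound (hN : 2 ≤ N) {g : ℝ → ℝ} {M : ℝ}
    (hM : ∀ y ∈ Icc (0:ℝ) 1, |g y| ≤ M) (hx : x ∈ Icc (0:ℝ) 1) (k : ℕ) :
    ‖trm N g x k‖ ≤ ((N:ℝ) + (N:ℝ)^2) * M / ((k:ℝ) + 1) ^ 3 := by
  set A : ℝ := x + ((N + k : ℕ) : ℝ) with hAdef
  have hA2 : (2:ℝ) ≤ A := two_le_A hN k hx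
  have hA0 : (0:ℝ) < A := by linarith
  have hkA : (k:ℝ) + 1 ≤ A - 1 := k_lt_A hN k hx
  have hk0 : (0:ℝ) < (k:ℝ) + 1 := by positivity
  have hM0 : 0 ≤ M := le_trans (abs_nonneg _) (hM 0 (by norm_num))
  -- the difference of branch points
  have hA'eq : x + ((N + k + 1 : ℕ) : ℝ) = A + 1 := by rw [hAdef]; push_cast; ring
  have hdiff : uNi N (N + k + 1) x - uNi N (N + k) x = (N:ℝ) / (A * (A + 1)) := by
    have hAne : A ≠ 0 := hA0.ne'
    have hA1ne : A + 1 ≠ 0 := by nlinarith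
    simp only [uNi, hA'eq, ← hAdef]
    field_simp
    ring
  -- bound the integral
  have hIb : ‖∫ u in (uNi N (N + k) x)..(uNi N (N + k + 1) x), g u‖
      ≤ M * |uNi N (N + k + 1) x - uNi N (N + k) x| := by
    apply intervalIntegral.norm_integral_le_of_norm_le_const
    intro y hy
    rw [uIoc_of_le (uNi_le hN k hx)] at hy
    exact hM y (uNi_Icc_subset hN k hx ⟨hy.1.le, hy.2⟩)
  have hAp : (0:ℝ) < A * (A + 1) := by nlinarith
  rw [hdiff, abs_of_nonneg (div_nonneg (Nat.cast_nonneg N) hAp.le)] at hIb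
  have hc1 : (((N + k : ℕ) : ℝ) + 1 - N) = (k:ℝ) + 1 := by push_cast; ring
  have hxN : x + (N:ℝ) - 1 ≤ (N:ℝ) := by have := hx.2; linarith
  have hxN0 : 0 ≤ x + (N:ℝ) - 1 := by
    have h1 : (2:ℝ) ≤ (N:ℝ) := by exact_mod_cast hN
    have := hx.1; linarith
  have hN0 : (0:ℝ) ≤ N := Nat.cast_nonneg N
  -- first summand bound
  have h1 : |(((N + k : ℕ) : ℝ) + 1 - N) / A ^ 2
      * (∫ u in (uNi N (N + k) x)..(uNi N (N + k + 1) x), g u)|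
      ≤ (N:ℝ) * M / ((k:ℝ) + 1) ^ 3 := by
    rw [abs_mul, hc1, abs_of_nonneg (by positivity : (0:ℝ) ≤ ((k:ℝ)+1) / A^2)]
    have step1 : ((k:ℝ) + 1) / A ^ 2 * |∫ u in (uNi N (N + k) x)..(uNi N (N + k + 1) x), g u|
        ≤ ((k:ℝ) + 1) / A ^ 2 * (M * ((N:ℝ) / (A * (A + 1)))) := by
      gcongr
      exact hIb
    refine step1.trans ?_
    have e0 : ((k:ℝ) + 1) / A ^ 2 * (M * ((N:ℝ) / (A * (A + 1))))
        = ((k:ℝ) + 1) * M * (N:ℝ) / (A ^ 2 * (A * (A + 1))) := by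
      field_simp
    rw [e0, div_le_div_iff₀ (by nlinarith) (by positivity)]
    have hkA' : (k:ℝ) + 1 ≤ A := by linarith
    have h4 : ((k:ℝ) + 1) ^ 4 ≤ A ^ 4 := pow_le_pow_left₀ hk0.le hkA' 4
    have h5 : ((k:ℝ) + 1) * ((k:ℝ) + 1) ^ 3 ≤ A ^ 2 * (A * (A + 1)) := by nlinarith
    nlinarith [mul_le_mul_of_nonneg_left h5 (mul_nonneg hM0 hN0)]
  -- second summand bound
  have h2 : |((N : ℝ) * (x + N - 1)) / ((A - 1) * A ^ 3) * g (uNi N (N + k) x)|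
      ≤ (N:ℝ)^2 * M / ((k:ℝ) + 1) ^ 3 := by
    rw [abs_mul]
    have hA10 : (0:ℝ) < A - 1 := by linarith
    have hden : (0:ℝ) < (A - 1) * A ^ 3 := mul_pos hA10 (pow_pos hA0 3)
    have hcoef : |((N : ℝ) * (x + N - 1)) / ((A - 1) * A ^ 3)|
        = ((N : ℝ) * (x + N - 1)) / ((A - 1) * A ^ 3) :=
      abs_of_nonneg (div_nonneg (mul_nonneg hN0 hxN0) hden.le)
    rw [hcoef]
    have hgb : |g (uNi N (N + k) x)| ≤ M := hM _ (uNi_mem hN k hx)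
    have hcb : ((N : ℝ) * (x + N - 1)) / ((A - 1) * A ^ 3) ≤ (N:ℝ)^2 / ((k:ℝ) + 1) ^ 3 := by
      rw [div_le_div_iff₀ hden (by positivity)]
      have e1 : (N:ℝ) * (x + N - 1) ≤ (N:ℝ) * (N:ℝ) := by nlinarith
      have hkA' : (k:ℝ) + 1 ≤ A := by linarith
      have e2a : ((k:ℝ) + 1) ^ 2 ≤ A ^ 2 := by nlinarith
      have e2 : ((k:ℝ) + 1) ^ 3 ≤ (A - 1) * A ^ 2 := by
        nlinarith [mul_le_mul hkA e2a (by positivity) hA10.le]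
      calc (N:ℝ) * (x + N - 1) * ((k:ℝ) + 1) ^ 3
          ≤ (N:ℝ) * (N:ℝ) * ((A - 1) * A ^ 2) := by
            apply mul_le_mul e1 e2 (by positivity) (by positivity)
        _ ≤ (N:ℝ)^2 * ((A - 1) * A ^ 3) := by
            nlinarith [mul_nonneg (mul_nonneg (sq_nonneg (N:ℝ))
              (mul_nonneg hA10.le hA10.le)) (sq_nonneg A)]
    calc ((N : ℝ) * (x + N - 1)) / ((A - 1) * A ^ 3) * |g (uNi N (N + k) x)|
        ≤ ((N:ℝ)^2 / ((k:ℝ) + 1) ^ 3) * M := by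
          apply mul_le_mul hcb hgb (abs_nonneg _) (by positivity)
      _ = (N:ℝ)^2 * M / ((k:ℝ) + 1) ^ 3 := by ring
  calc ‖trm N g x k‖ ≤ |(((N + k : ℕ) : ℝ) + 1 - N) / A ^ 2
      * (∫ u in (uNi N (N + k) x)..(uNi N (N + k + 1) x), g u)|
      + |((N : ℝ) * (x + N - 1)) / ((A - 1) * A ^ 3) * g (uNi N (N + k) x)| := by
        rw [Real.norm_eq_abs]; unfold trm; rw [← hAdef]; exact abs_add_le _ _
    _ ≤ (N:ℝ) * M / ((k:ℝ) + 1) ^ 3 + (N:ℝ)^2 * M / ((k:ℝ) + 1) ^ 3 := add_le_add h1 h2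
    _ = ((N:ℝ) + (N:ℝ)^2) * M / ((k:ℝ) + 1) ^ 3 := by ring

lemma summable_bound (C : ℝ) : Summable (fun k : ℕ => C / ((k:ℝ) + 1) ^ 3) := by
  have h : Summable (fun k : ℕ => 1 / ((k:ℝ) + 1) ^ 3) := by
    have := (summable_nat_add_iff (f := fun n : ℕ => 1 / (n:ℝ) ^ 3) 1).mpr
      (Real.summable_one_div_nat_pow.mpr (by norm_num))
    convert this using 2 with k
    case e'_3 => rfl
    case e'_5 => norm_num
  simpa [div_eq_mul_inv, mul_assoc] using h.mul_left C

lemma summable_trm (hN : 2 ≤ N) {g : ℝ → ℝ} (hg : Continuous g) (hx : x ∈ Icc (0:ℝ) 1) :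
    Summable (trm N g x) := by
  obtain ⟨M, hM⟩ := isCompact_Icc.exists_bound_of_continuousOn
    (hg.continuousOn : ContinuousOn g (Icc (0:ℝ) 1))
  have hM' : ∀ y ∈ Icc (0:ℝ) 1, |g y| ≤ M := fun y hy => by
    simpa [Real.norm_eq_abs] using hM y hy
  exact Summable.of_norm_bounded (summable_bound (((N:ℝ) + (N:ℝ)^2) * M))
    (fun k => trm_bound hN hM' hx k)

/-- Monotonicity of -V. -/
lemma negV_mono (hN : 2 ≤ N) {g h : ℝ → ℝ} (hg : Continuous g) (hh : Continuous h)
    (hle : ∀ y ∈ Icc (0:ℝ) 1, g y ≤ h y) (hx : x ∈ Icc (0:ℝ) 1) :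
    -V N g x ≤ -V N h x := by
  rw [negV_eq, negV_eq]
  exact Summable.tsum_le_tsum (trm_mono hN hg hh hle hx) (summable_trm hN hg hx)
    (summable_trm hN hh hx)

/-- V commutes with scalar multiplication (pointwise, unconditionally). -/
lemma V_smul (c : ℝ) (g : ℝ → ℝ) (x : ℝ) :
    V N (fun y => c * g y) x = c * V N g x := by
  rw [V_eq, V_eq]
  have hterm : ∀ k, trm N (fun y => c * g y) x k = c * trm N g x k := by
    intro k
    unfold trm
    rw [intervalIntegral.integral_const_mul]
    ring
  rw [tsum_congr hterm, tsum_mul_left]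
  ring

/-- V only depends on values on [0,1], for x in [0,1]. -/
lemma V_congr (hN : 2 ≤ N) {g h : ℝ → ℝ} (heq : ∀ y ∈ Icc (0:ℝ) 1, g y = h y)
    (hx : x ∈ Icc (0:ℝ) 1) : V N g x = V N h x := by
  rw [V_eq, V_eq]
  congr 1
  apply tsum_congr
  intro k
  unfold trm
  have hI : (∫ u in (uNi N (N + k) x)..(uNi N (N + k + 1) x), g u)
      = ∫ u in (uNi N (N + k) x)..(uNi N (N + k + 1) x), h u := by
    apply intervalIntegral.integral_congr
    intro y hy
    rw [uIcc_of_le (uNi_le hN k hx)] at hy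
    exact heq y (uNi_Icc_subset hN k hx hy)
  rw [hI, heq _ (uNi_mem hN k hx)]

/-- Continuity of V g on [0,1] for continuous g. -/
lemma V_contOn (hN : 2 ≤ N) {g : ℝ → ℝ} (hg : Continuous g) :
    ContinuousOn (V N g) (Icc (0:ℝ) 1) := by
  obtain ⟨M, hM⟩ := isCompact_Icc.exists_bound_of_continuousOn
    (hg.continuousOn : ContinuousOn g (Icc (0:ℝ) 1))
  have hM' : ∀ y ∈ Icc (0:ℝ) 1, |g y| ≤ M := fun y hy => by
    simpa [Real.norm_eq_abs] using hM y hy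
  have key : ContinuousOn (fun x => ∑' k, trm N g x k) (Icc (0:ℝ) 1) := by
    refine continuousOn_tsum (α := ℕ) (β := ℝ) (f := fun (k : ℕ) (x : ℝ) => trm N g x k)
      (u := fun k => ((N:ℝ) + (N:ℝ)^2) * M / ((k:ℝ) + 1) ^ 3) ?_ (summable_bound _) ?_
    · intro k
      -- continuity of each term
      have hAne : ∀ y ∈ Icc (0:ℝ) 1, y + ((N + k : ℕ) : ℝ) ≠ 0 :=
        fun y hy => (A_pos hN k hy).ne'
      have hA'ne : ∀ y ∈ Icc (0:ℝ) 1, y + ((N + k + 1 : ℕ) : ℝ) ≠ 0 := by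
        intro y hy
        have := A_pos hN (k + 1) hy
        rw [show N + (k + 1) = N + k + 1 by ring] at this
        exact this.ne'
      have hu1 : ContinuousOn (fun y => uNi N (N + k) y) (Icc (0:ℝ) 1) := by
        simp only [uNi]
        exact continuousOn_const.sub (continuousOn_const.div
          ((continuous_id.add continuous_const).continuousOn) hAne)
      have hu2 : ContinuousOn (fun y => uNi N (N + k + 1) y) (Icc (0:ℝ) 1) := by
        simp only [uNi]
        exact continuousOn_const.sub (continuousOn_const.div
          ((continuous_id.add continuous_const).continuousOn) hA'ne)
      have hF : Continuous (fun t : ℝ => ∫ u in (0:ℝ)..t, g u) :=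
        intervalIntegral.continuous_primitive (μ := volume) (fun a b => hg.intervalIntegrable a b) 0
      have hIeq : ∀ y : ℝ, (∫ u in (uNi N (N + k) y)..(uNi N (N + k + 1) y), g u)
          = (∫ u in (0:ℝ)..(uNi N (N + k + 1) y), g u)
            - (∫ u in (0:ℝ)..(uNi N (N + k) y), g u) := by
        intro y
        have := intervalIntegral.integral_add_adjacent_intervals (μ := volume)
          (hg.intervalIntegrable 0 (uNi N (N + k) y))
          (hg.intervalIntegrable (uNi N (N + k) y) (uNi N (N + k + 1) y))
        linarith
      have hIcont : ContinuousOn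
          (fun y => ∫ u in (uNi N (N + k) y)..(uNi N (N + k + 1) y), g u)
          (Icc (0:ℝ) 1) := by
        have : ContinuousOn (fun y => (∫ u in (0:ℝ)..(uNi N (N + k + 1) y), g u)
            - (∫ u in (0:ℝ)..(uNi N (N + k) y), g u)) (Icc (0:ℝ) 1) :=
          (hF.comp_continuousOn hu2).sub (hF.comp_continuousOn hu1)
        exact this.congr (fun y _ => hIeq y)
      have hc1 : ContinuousOn
          (fun y => (((N + k : ℕ) : ℝ) + 1 - N) / (y + ((N + k : ℕ) : ℝ)) ^ 2)
          (Icc (0:ℝ) 1) :=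
        continuousOn_const.div
          (((continuous_id.add continuous_const).pow 2).continuousOn)
          (fun y hy => pow_ne_zero 2 (hAne y hy))
      have hc2 : ContinuousOn
          (fun y => ((N : ℝ) * (y + N - 1)) /
            ((y + ((N + k : ℕ) : ℝ) - 1) * (y + ((N + k : ℕ) : ℝ)) ^ 3))
          (Icc (0:ℝ) 1) := by
        apply ContinuousOn.div
        · exact (continuous_const.mul ((continuous_id.add continuous_const).sub
            continuous_const)).continuousOn
        · exact (((continuous_id.add continuous_const).sub continuous_const).mul
            ((continuous_id.add continuous_const).pow 3)).continuousOn
        · intro y hy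
          have h2A := two_le_A hN k hy
          have hA0 := A_pos hN k hy
          apply mul_ne_zero
          · intro hcon; rw [sub_eq_zero] at hcon; rw [hcon] at h2A; linarith
          · exact pow_ne_zero 3 hA0.ne'
      have hgu : ContinuousOn (fun y => g (uNi N (N + k) y)) (Icc (0:ℝ) 1) :=
        hg.comp_continuousOn hu1
      exact (hc1.mul hIcont).add (hc2.mul hgu)
    · intro k y hy
      exact trm_bound hN hM' hy k
  have : ContinuousOn (fun x => -∑' k, trm N g x k) (Icc (0:ℝ) 1) := key.neg
  exact this.congr (fun y _ => V_eq N g y)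

end Stmt18Aux

open Stmt18Aux in
theorem stmt18 (N : ℕ) (hN : 2 ≤ N)
    (f0 f0' : ℝ → ℝ)
    (hderiv : ∀ x ∈ Set.Icc (0:ℝ) 1, HasDerivWithinAt f0 (f0' x) (Set.Icc (0:ℝ) 1) x)
    (hcont : ContinuousOn f0' (Set.Icc (0:ℝ) 1))
    (hpos : ∀ x ∈ Set.Icc (0:ℝ) 1, 0 < f0' x)
    (v w : ℝ) (hv : 0 < v) (hvw : v ≤ w)
    (φ : ℝ → ℝ) (hφc : ContinuousOn φ (Set.Icc (0:ℝ) 1))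
    (hφ : ∀ x ∈ Set.Icc (0:ℝ) 1, φ x < 0)
    (hVφ : ∀ x ∈ Set.Icc (0:ℝ) 1, v * (-φ x) ≤ V N φ x ∧ V N φ x ≤ w * (-φ x))
    (α β : ℝ)
    (hα : IsLeast ((fun x => -φ x / f0' x) '' Set.Icc (0:ℝ) 1) α)
    (hβ : IsGreatest ((fun x => -φ x / f0' x) '' Set.Icc (0:ℝ) 1) β)
    :
    ∀ n : ℕ, 1 ≤ n → ∀ x ∈ Set.Icc (0:ℝ) 1,
      α / β * v ^ n * f0' x ≤ (-1 : ℝ) ^ n * (V N)^[n] f0' x ∧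
      (-1 : ℝ) ^ n * (V N)^[n] f0' x ≤ β / α * w ^ n * f0' x := by
  -- continuous global representatives via projection onto [0,1]
  set proj : ℝ → ℝ := fun y => ((Set.projIcc (0:ℝ) 1 zero_le_one y : Set.Icc (0:ℝ) 1) : ℝ)
    with hproj
  have hprojc : Continuous proj := continuous_subtype_val.comp continuous_projIcc
  have hprojmem : ∀ y, proj y ∈ Set.Icc (0:ℝ) 1 := fun y => Subtype.coe_prop _
  have hprojeq : ∀ y ∈ Set.Icc (0:ℝ) 1, proj y = y := by
    intro y hy
    simp only [hproj, Set.projIcc_of_mem zero_le_one hy]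
  set ψ : ℝ → ℝ := fun y => -φ (proj y) with hψ
  have hψc : Continuous ψ := (hφc.comp_continuous hprojc hprojmem).neg
  have hψeq : ∀ y ∈ Set.Icc (0:ℝ) 1, ψ y = -φ y := by
    intro y hy; simp only [hψ, hprojeq y hy]
  set F0 : ℝ → ℝ := fun y => f0' (proj y) with hF0
  have hF0c : Continuous F0 := hcont.comp_continuous hprojc hprojmem
  have hF0eq : ∀ y ∈ Set.Icc (0:ℝ) 1, F0 y = f0' y := by
    intro y hy; simp only [hF0, hprojeq y hy]
  -- basic positivity of α, β
  have hw : 0 < w := lt_of_lt_of_le hv hvw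
  obtain ⟨x₀, hx₀, hx₀eq⟩ := hα.1
  have hα0 : 0 < α := by
    rw [← hx₀eq]
    exact div_pos (by linarith [hφ x₀ hx₀]) (hpos x₀ hx₀)
  have hαβ : α ≤ β := hβ.2 hα.1
  have hβ0 : 0 < β := lt_of_lt_of_le hα0 hαβ
  have hlow : ∀ x ∈ Set.Icc (0:ℝ) 1, α * f0' x ≤ -φ x := by
    intro x hx
    have h1 : α ≤ -φ x / f0' x := hα.2 ⟨x, hx, rfl⟩
    have h2 := hpos x hx
    calc α * f0' x ≤ (-φ x / f0' x) * f0' x := by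
          apply mul_le_mul_of_nonneg_right h1 h2.le
      _ = -φ x := by field_simp
  have hhigh : ∀ x ∈ Set.Icc (0:ℝ) 1, -φ x ≤ β * f0' x := by
    intro x hx
    have h1 : -φ x / f0' x ≤ β := hβ.2 ⟨x, hx, rfl⟩
    have h2 := hpos x hx
    calc -φ x = (-φ x / f0' x) * f0' x := by field_simp
      _ ≤ β * f0' x := mul_le_mul_of_nonneg_right h1 h2.le
  -- the master induction
  have key : ∀ n : ℕ, ∃ P F : ℝ → ℝ, Continuous P ∧ Continuous F ∧
      (∀ x ∈ Set.Icc (0:ℝ) 1, F x = (-1:ℝ)^n * (V N)^[n] f0' x) ∧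
      (∀ x ∈ Set.Icc (0:ℝ) 1, v^n * (-φ x) ≤ P x ∧ P x ≤ w^n * (-φ x)) ∧
      (∀ x ∈ Set.Icc (0:ℝ) 1, (1/β) * P x ≤ F x ∧ F x ≤ (1/α) * P x) := by
    intro n
    induction n with
    | zero =>
      refine ⟨ψ, F0, hψc, hF0c, ?_, ?_, ?_⟩
      · intro x hx; simp [hF0eq x hx]
      · intro x hx; simp [hψeq x hx]
      · intro x hx
        rw [hψeq x hx, hF0eq x hx]
        constructor
        · have h := mul_le_mul_of_nonneg_left (hhigh x hx)
            (le_of_lt (one_div_pos.mpr hβ0))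
          rw [one_div, inv_mul_cancel_left₀ hβ0.ne'] at h
          simpa using h
        · have h := mul_le_mul_of_nonneg_left (hlow x hx)
            (le_of_lt (one_div_pos.mpr hα0))
          rw [one_div, inv_mul_cancel_left₀ hα0.ne'] at h
          simpa using h
    | succ n ih =>
      obtain ⟨P, F, hPc, hFc, hFeq, hPsand, hPF⟩ := ih
      -- new representatives
      refine ⟨fun y => -(V N P (proj y)), fun y => -(V N F (proj y)),
        ((V_contOn hN hPc).comp_continuous hprojc hprojmem).neg,
        ((V_contOn hN hFc).comp_continuous hprojc hprojmem).neg, ?_, ?_, ?_⟩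
      · -- F_{n+1} = (-1)^{n+1} V^{n+1} f0' on [0,1]
        intro x hx
        simp only [hprojeq x hx]
        have hiter : (V N)^[n+1] f0' x = V N ((V N)^[n] f0') x := by
          rw [Function.iterate_succ_apply']
        have hcongr : V N ((V N)^[n] f0') x = V N (fun y => (-1:ℝ)^n * F y) x := by
          apply V_congr hN _ hx
          intro y hy
          have := hFeq y hy
          have hsq : (-1:ℝ)^n * (-1:ℝ)^n = 1 := by
            rw [← pow_add, show n + n = 2 * n by ring, pow_mul]; norm_num
          calc (V N)^[n] f0' y = 1 * (V N)^[n] f0' y := by ring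
            _ = ((-1:ℝ)^n * (-1:ℝ)^n) * (V N)^[n] f0' y := by rw [hsq]
            _ = (-1:ℝ)^n * F y := by rw [this]; ring
        rw [hiter, hcongr, V_smul]
        have hsq : (-1:ℝ)^(n+1) * (-1:ℝ)^n = -1 := by
          rw [← pow_add, show n + 1 + n = 2 * n + 1 by ring, pow_succ, pow_mul]
          norm_num
        calc -(V N F x) = (-1:ℝ) * V N F x := by ring
          _ = ((-1:ℝ)^(n+1) * (-1:ℝ)^n) * V N F x := by rw [hsq]
          _ = (-1:ℝ)^(n+1) * ((-1:ℝ)^n * V N F x) := by ring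
      · -- sandwich for P
        intro x hx
        simp only [hprojeq x hx]
        have hVψ : -V N ψ x = V N φ x := by
          have h1 : V N ψ x = V N (fun y => (-1:ℝ) * φ y) x := by
            apply V_congr hN _ hx
            intro y hy
            rw [hψeq y hy]; ring
          rw [h1, V_smul]; ring
        constructor
        · have step1 : -V N (fun y => v^n * ψ y) x ≤ -V N P x := by
            apply negV_mono hN (continuous_const.mul hψc) hPc _ hx
            intro y hy
            show v^n * ψ y ≤ P y
            rw [hψeq y hy]
            exact (hPsand y hy).1
          have step2 : -V N (fun y => v^n * ψ y) x = v^n * V N φ x := by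
            rw [V_smul]
            rw [← hVψ]; ring
          have step3 : v^(n+1) * (-φ x) ≤ v^n * V N φ x := by
            have := (hVφ x hx).1
            have hvn : (0:ℝ) ≤ v^n := by positivity
            calc v^(n+1) * (-φ x) = v^n * (v * (-φ x)) := by ring
              _ ≤ v^n * V N φ x := mul_le_mul_of_nonneg_left this hvn
          linarith [step1, step2.symm.le, step3]
        · have step1 : -V N P x ≤ -V N (fun y => w^n * ψ y) x := by
            apply negV_mono hN hPc (continuous_const.mul hψc) _ hx
            intro y hy
            show P y ≤ w^n * ψ y
            rw [hψeq y hy]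
            exact (hPsand y hy).2
          have step2 : -V N (fun y => w^n * ψ y) x = w^n * V N φ x := by
            rw [V_smul, ← hVψ]; ring
          have step3 : w^n * V N φ x ≤ w^(n+1) * (-φ x) := by
            have := (hVφ x hx).2
            have hwn : (0:ℝ) ≤ w^n := pow_nonneg hw.le n
            calc w^n * V N φ x ≤ w^n * (w * (-φ x)) := mul_le_mul_of_nonneg_left this hwn
              _ = w^(n+1) * (-φ x) := by ring
          linarith [step1, step2.le, step3]
      · -- comparison between P and F iterates
        intro x hx
        simp only [hprojeq x hx]
        constructor
        · have step1 : -V N (fun y => (1/β) * P y) x ≤ -V N F x := by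
            apply negV_mono hN (continuous_const.mul hPc) hFc _ hx
            intro y hy
            exact (hPF y hy).1
          have step2 : -V N (fun y => (1/β) * P y) x = (1/β) * (-V N P x) := by
            rw [V_smul]; ring
          linarith [step2 ▸ step1]
        · have step1 : -V N F x ≤ -V N (fun y => (1/α) * P y) x := by
            apply negV_mono hN hFc (continuous_const.mul hPc) _ hx
            intro y hy
            exact (hPF y hy).2
          have step2 : -V N (fun y => (1/α) * P y) x = (1/α) * (-V N P x) := by
            rw [V_smul]; ring
          linarith [step2 ▸ step1]
  -- conclude
  intro n _ x hx
  obtain ⟨P, F, hPc, hFc, hFeq, hPsand, hPF⟩ := key n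
  have hFx := hFeq x hx
  have h1 := (hPsand x hx).1
  have h2 := (hPsand x hx).2
  have h3 := (hPF x hx).1
  have h4 := (hPF x hx).2
  have hl := hlow x hx
  have hh := hhigh x hx
  have hvn : (0:ℝ) < v^n := pow_pos hv n
  have hwn : (0:ℝ) < w^n := pow_pos hw n
  have hf0x := hpos x hx
  constructor
  · -- lower bound
    have c1 : α / β * v ^ n * f0' x ≤ (1/β) * (v^n * (-φ x)) := by
      have h := mul_le_mul_of_nonneg_left
        (mul_le_mul_of_nonneg_right hl hvn.le) (le_of_lt (one_div_pos.mpr hβ0))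
      calc α / β * v ^ n * f0' x = 1/β * (α * f0' x * v^n) := by ring
        _ ≤ 1/β * (-φ x * v^n) := h
        _ = 1/β * (v^n * (-φ x)) := by ring
    have c2 : (1/β) * (v^n * (-φ x)) ≤ (1/β) * P x :=
      mul_le_mul_of_nonneg_left h1 (by positivity)
    rw [← hFx]
    linarith
  · -- upper bound
    have c1 : (1/α) * P x ≤ (1/α) * (w^n * (-φ x)) :=
      mul_le_mul_of_nonneg_left h2 (by positivity)
    have c2 : (1/α) * (w^n * (-φ x)) ≤ β / α * w ^ n * f0' x := by
      have h := mul_le_mul_of_nonneg_left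
        (mul_le_mul_of_nonneg_right hh hwn.le) (le_of_lt (one_div_pos.mpr hα0))
      calc 1/α * (w^n * (-φ x)) = 1/α * (-φ x * w^n) := by ring
        _ ≤ 1/α * (β * f0' x * w^n) := h
        _ = β / α * w ^ n * f0' x := by ring
    rw [← hFx]
    linarith
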